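/- Let k be a positive integer, p prime, and F ⊆ 2^[n] a k-wise p-divisible family whose F_p-span V satisfies V^⟨k⟩ = C₁ ⊕ C₂ where C₁, C₂ have disjoint non-zero supports S₁, S₂ with S₁ ∪ S₂ = [n]. Then the restricted families F₁ = {A ∩ S₁ : A ∈ F} and F₂ = {A ∩ S₂ : A ∈ F} are each k-wise p-divisible, and |F| ≤ |F₁|·|F₂|. -/

import Mathlib

open Submodule

/-- The (Schur / coordinatewise) product of two subspaces of `Fin n → K`. -/
def schurMul {K : Type*} [CommRing K] {n : ℕ} (C D : Submodule K (Fin n → K)) :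
    Submodule K (Fin n → K) :=
  Submodule.span K {x | ∃ c ∈ C, ∃ d ∈ D, x = c * d}

/-- `schurPow C k` is the `(k+1)`-st Schur power `C^⟨k+1⟩`; so `schurPow C 0 = C^⟨1⟩ = C`. -/
def schurPow {K : Type*} [CommRing K] {n : ℕ} (C : Submodule K (Fin n → K)) :
    ℕ → Submodule K (Fin n → K)
  | 0 => C
  | k + 1 => schurMul (schurPow C k) C

/-- The stabiliser `St(E) = {x : x * E ⊆ E}` of a subspace, itself a subspace. -/
def stab {K : Type*} [CommRing K] {n : ℕ} (E : Submodule K (Fin n → K)) :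
    Submodule K (Fin n → K) where
  carrier := {x | ∀ e ∈ E, x * e ∈ E}
  add_mem' := fun {a b} ha hb e he => by simpa [add_mul] using E.add_mem (ha e he) (hb e he)
  zero_mem' := fun e he => by simp
  smul_mem' := fun c {x} hx e he => by simpa [smul_mul_assoc] using E.smul_mem c (hx e he)

/-- Support of a subspace of `Fin n → K`. -/
def suppS {K : Type*} [CommRing K] {n : ℕ} (C : Submodule K (Fin n → K)) : Set (Fin n) :=
  {i | ∃ v ∈ C, v i ≠ 0}

/-- Characteristic vector of a finite set. -/
def charVec (R : Type*) [Zero R] [One R] {n : ℕ} (A : Finset (Fin n)) : Fin n → R :=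
  fun i => if i ∈ A then 1 else 0

/-- `𝓕` is `k`-wise `ℓ`-divisible: every intersection of `k` (not necessarily distinct)
members of `𝓕` has cardinality divisible by `ℓ`. -/
def kWiseDiv (n k ℓ : ℕ) (𝓕 : Finset (Finset (Fin n))) : Prop :=
  ∀ A : Fin k → Finset (Fin n), (∀ i, A i ∈ 𝓕) → ℓ ∣ (Finset.univ.inf A).card

/-- Support of a set family. -/
def famSupp {n : ℕ} (ℱ : Set (Finset (Fin n))) : Set (Fin n) :=
  ⋃ B ∈ ℱ, (B : Set (Fin n))

/-- `A` is an atom of the family `ℱ`: a nonempty subset of the support such that every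
member of `ℱ` contains `A` or is disjoint from it, maximal with this property. -/
def IsAtomOf {n : ℕ} (ℱ : Set (Finset (Fin n))) (A : Finset (Fin n)) : Prop :=
  A.Nonempty ∧ (A : Set (Fin n)) ⊆ famSupp ℱ ∧ (∀ B ∈ ℱ, A ⊆ B ∨ Disjoint A B) ∧
    ∀ A' : Finset (Fin n), A ⊆ A' → (A' : Set (Fin n)) ⊆ famSupp ℱ →
      (∀ B ∈ ℱ, A' ⊆ B ∨ Disjoint A' B) → A' = A

/-- The family `ℱ^r` of all `r`-fold intersections of members of `ℱ`. -/
def interFam {n : ℕ} (ℱ : Set (Finset (Fin n))) (r : ℕ) : Set (Finset (Fin n)) :=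
  {S | ∃ f : Fin r → Finset (Fin n), (∀ i, f i ∈ ℱ) ∧ S = Finset.univ.inf f}

/-- The linear map sending `v` to its restriction (indicator) on a coordinate set `S`. -/
noncomputable def indicatorMapL {K : Type*} [CommRing K] {n : ℕ} (S : Set (Fin n)) :
    (Fin n → K) →ₗ[K] (Fin n → K) where
  toFun v := S.indicator v
  map_add' a b := by
    funext i; by_cases h : i ∈ S <;> simp [Set.indicator_apply, h]
  map_smul' c a := by
    funext i; by_cases h : i ∈ S <;> simp [Set.indicator_apply, h]

/-- Restriction (projection) of a subspace `V` to the coordinates in `S`. -/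
noncomputable def restrTo {K : Type*} [CommRing K] {n : ℕ} (S : Set (Fin n))
    (V : Submodule K (Fin n → K)) : Submodule K (Fin n → K) :=
  V.map (indicatorMapL S)

section Aux

open scoped Pointwise

variable {K : Type*} [CommRing K] {n : ℕ}

lemma schurMul_eq_mul (C D : Submodule K (Fin n → K)) : schurMul C D = C * D := by
  rw [Submodule.mul_eq_span_mul_set, schurMul]
  congr 1
  ext x
  simp only [Set.mem_mul, Set.mem_setOf_eq, SetLike.mem_coe]
  constructor
  · rintro ⟨c, hc, d, hd, rfl⟩; exact ⟨c, hc, d, hd, rfl⟩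
  · rintro ⟨c, hc, d, hd, rfl⟩; exact ⟨c, hc, d, hd, rfl⟩

lemma charVec_mul (A B : Finset (Fin n)) :
    charVec K A * charVec K B = charVec K (A ∩ B) := by
  funext i
  by_cases hA : i ∈ A <;> by_cases hB : i ∈ B <;>
    simp [charVec, hA, hB, Finset.mem_inter]

lemma inf_cons {m : ℕ} (A : Finset (Fin n)) (f : Fin m → Finset (Fin n)) :
    Finset.univ.inf (Fin.cons A f) = A ∩ Finset.univ.inf f := by
  ext x
  simp [Finset.mem_inf, Fin.forall_fin_succ]

lemma sum_charVec (A : Finset (Fin n)) : ∑ i, charVec K A i = (A.card : K) := by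
  simp [charVec, Finset.sum_boole, Finset.filter_univ_mem]

/-- Generators of the `(j+1)`-st Schur power of the span of characteristic vectors. -/
def genSet (p n : ℕ) (𝓕 : Finset (Finset (Fin n))) (j : ℕ) : Set (Fin n → ZMod p) :=
  {v | ∃ f : Fin (j + 1) → Finset (Fin n), (∀ i, f i ∈ 𝓕) ∧
      v = charVec (ZMod p) (Finset.univ.inf f)}

lemma schurPow_le_span (p n : ℕ) (𝓕 : Finset (Finset (Fin n)))
    (V : Submodule (ZMod p) (Fin n → ZMod p))
    (hV : V = Submodule.span (ZMod p) (charVec (ZMod p) '' (𝓕 : Set (Finset (Fin n)))))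
    (j : ℕ) : schurPow V j ≤ Submodule.span (ZMod p) (genSet p n 𝓕 j) := by
  induction j with
  | zero =>
    rw [show schurPow V 0 = V from rfl, hV]
    apply Submodule.span_mono
    rintro _ ⟨A, hA, rfl⟩
    exact ⟨fun _ => A, fun _ => hA,
      by rw [Finset.inf_const Finset.univ_nonempty]⟩
  | succ j ih =>
    have h1 : schurPow V (j + 1) = schurMul (schurPow V j) V := rfl
    rw [h1, schurMul_eq_mul]
    calc schurPow V j * V
        ≤ Submodule.span (ZMod p) (genSet p n 𝓕 j) *
            Submodule.span (ZMod p) (charVec (ZMod p) '' (𝓕 : Set (Finset (Fin n)))) := by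
          exact mul_le_mul' ih (le_of_eq hV)
      _ = Submodule.span (ZMod p)
            (genSet p n 𝓕 j * (charVec (ZMod p) '' (𝓕 : Set (Finset (Fin n))))) := by
          rw [Submodule.span_mul_span]
      _ ≤ Submodule.span (ZMod p) (genSet p n 𝓕 (j + 1)) := by
          apply Submodule.span_mono
          rintro x hx
          rw [Set.mem_mul] at hx
          obtain ⟨a, ⟨f, hf, rfl⟩, b, ⟨A, hA, rfl⟩, rfl⟩ := hx
          refine ⟨Fin.cons A f, ?_, ?_⟩
          · intro i
            refine Fin.cases ?_ ?_ i
            · exact hA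
            · exact hf
          · rw [charVec_mul, inf_cons, Finset.inter_comm]

lemma mem_schurPow (p n : ℕ) (𝓕 : Finset (Finset (Fin n)))
    (V : Submodule (ZMod p) (Fin n → ZMod p))
    (hV : V = Submodule.span (ZMod p) (charVec (ZMod p) '' (𝓕 : Set (Finset (Fin n)))))
    (j : ℕ) (f : Fin (j + 1) → Finset (Fin n)) (hf : ∀ i, f i ∈ 𝓕) :
    charVec (ZMod p) (Finset.univ.inf f) ∈ schurPow V j := by
  induction j with
  | zero =>
    have huniv : (Finset.univ : Finset (Fin (0 + 1))) = {0} := by decide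
    have : Finset.univ.inf f = f 0 := by rw [huniv, Finset.inf_singleton]
    rw [this, hV]
    exact Submodule.subset_span ⟨f 0, hf 0, rfl⟩
  | succ j ih =>
    have hdec : Finset.univ.inf f = f 0 ∩ Finset.univ.inf (Fin.tail f) := by
      conv_lhs => rw [← Fin.cons_self_tail f]
      rw [inf_cons]
    have hmem : charVec (ZMod p) (f 0) ∈ V := by
      rw [hV]; exact Submodule.subset_span ⟨f 0, hf 0, rfl⟩
    have hx : charVec (ZMod p) (Finset.univ.inf (Fin.tail f)) * charVec (ZMod p) (f 0)
        ∈ schurMul (schurPow V j) V :=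
      Submodule.subset_span ⟨_, ih (Fin.tail f) (fun i => hf i.succ), _, hmem, rfl⟩
    have : charVec (ZMod p) (Finset.univ.inf f) =
        charVec (ZMod p) (Finset.univ.inf (Fin.tail f)) * charVec (ZMod p) (f 0) := by
      rw [charVec_mul, hdec, Finset.inter_comm]
    rw [this]
    exact hx

lemma sum_eq_zero_of_mem_span (p n j : ℕ) [Fact p.Prime] (𝓕 : Finset (Finset (Fin n)))
    (hdiv : kWiseDiv n (j + 1) p 𝓕) {v : Fin n → ZMod p}
    (hv : v ∈ Submodule.span (ZMod p) (genSet p n 𝓕 j)) : ∑ i, v i = 0 := by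
  induction hv using Submodule.span_induction with
  | mem x hx =>
    obtain ⟨f, hf, rfl⟩ := hx
    rw [sum_charVec]
    rw [ZMod.natCast_eq_zero_iff]
    exact hdiv f hf
  | zero => simp
  | add x y hx hy ihx ihy => simp [Finset.sum_add_distrib, ihx, ihy]
  | smul a x hx ihx =>
    have : ∑ i, (a • x) i = a * ∑ i, x i := by simp [Finset.mul_sum]
    rw [this, ihx, mul_zero]

lemma key_div (p n k' : ℕ) [Fact p.Prime] (𝓕 : Finset (Finset (Fin n)))
    (hdiv : kWiseDiv n (k' + 1) p 𝓕)
    (V : Submodule (ZMod p) (Fin n → ZMod p))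
    (hV : V = Submodule.span (ZMod p) (charVec (ZMod p) '' (𝓕 : Set (Finset (Fin n)))))
    (C D : Submodule (ZMod p) (Fin n → ZMod p))
    (hdec : schurPow V k' = C ⊔ D)
    (S T : Finset (Fin n)) (hS : suppS C = ↑S) (hT : suppS D = ↑T)
    (hdisj : Disjoint S T) :
    kWiseDiv n (k' + 1) p (𝓕.image (· ∩ S)) := by
  intro B hB
  have hch : ∀ i, ∃ A, A ∈ 𝓕 ∧ A ∩ S = B i := by
    intro i
    simpa [Finset.mem_image] using hB i
  choose A hA hAS using hch
  have hinf : Finset.univ.inf B = Finset.univ.inf A ∩ S := by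
    ext x
    simp only [Finset.mem_inf, Finset.mem_univ, forall_true_left, ← hAS, Finset.mem_inter,
      true_implies]
    exact ⟨fun h => ⟨fun i => (h i).1, (h 0).2⟩, fun h i => ⟨h.1 i, h.2⟩⟩
  have hv : charVec (ZMod p) (Finset.univ.inf A) ∈ schurPow V k' :=
    mem_schurPow p n 𝓕 V hV k' A hA
  rw [hdec, Submodule.mem_sup] at hv
  obtain ⟨c, hc, d, hd, hcd⟩ := hv
  have hceq : c = charVec (ZMod p) (Finset.univ.inf A ∩ S) := by
    funext i
    by_cases hiS : i ∈ S
    · have hd0 : d i = 0 := by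
        by_contra h
        have hmem : i ∈ suppS D := ⟨d, hd, h⟩
        rw [hT] at hmem
        exact (Finset.disjoint_left.mp hdisj hiS) hmem
      have hci := congrFun hcd i
      simp only [Pi.add_apply, hd0, add_zero] at hci
      rw [hci]
      simp [charVec, Finset.mem_inter, hiS]
    · have hc0 : c i = 0 := by
        by_contra h
        have hmem : i ∈ suppS C := ⟨c, hc, h⟩
        rw [hS] at hmem
        exact hiS hmem
      simp [charVec, Finset.mem_inter, hiS, hc0]
  have hcmem : c ∈ Submodule.span (ZMod p) (genSet p n 𝓕 k') := by
    apply schurPow_le_span p n 𝓕 V hV k'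
    rw [hdec]
    exact Submodule.mem_sup_left hc
  have hsum := sum_eq_zero_of_mem_span p n k' 𝓕 hdiv hcmem
  rw [hceq, sum_charVec, ZMod.natCast_eq_zero_iff] at hsum
  rw [hinf]
  exact hsum

end Aux

/-- if `V^⟨k⟩ = C₁ ⊕ C₂` with disjoint nonzero supports covering `[n]`,
then the two restricted families are k-wise p-divisible and `|𝓕| ≤ |𝓕₁||𝓕₂|`.
(Recall `schurPow V (k-1) = V^⟨k⟩`.) -/
theorem statement12 (p n k : ℕ) [Fact p.Prime] (hk : 0 < k)
    (𝓕 : Finset (Finset (Fin n))) (hdiv : kWiseDiv n k p 𝓕)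
    (V : Submodule (ZMod p) (Fin n → ZMod p))
    (hV : V = Submodule.span (ZMod p) (charVec (ZMod p) '' (𝓕 : Set (Finset (Fin n)))))
    (C₁ C₂ : Submodule (ZMod p) (Fin n → ZMod p)) (hC₁ : C₁ ≠ ⊥) (hC₂ : C₂ ≠ ⊥)
    (hdec : schurPow V (k - 1) = C₁ ⊔ C₂)
    (S₁ S₂ : Finset (Fin n)) (hS₁ : suppS C₁ = ↑S₁) (hS₂ : suppS C₂ = ↑S₂)
    (hdisj : Disjoint S₁ S₂) (hcover : S₁ ∪ S₂ = Finset.univ) :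
    kWiseDiv n k p (𝓕.image (· ∩ S₁)) ∧ kWiseDiv n k p (𝓕.image (· ∩ S₂)) ∧
      𝓕.card ≤ (𝓕.image (· ∩ S₁)).card * (𝓕.image (· ∩ S₂)).card := by
  obtain ⟨k, rfl⟩ : ∃ k', k = k' + 1 := ⟨k - 1, (Nat.succ_pred_eq_of_pos hk).symm⟩
  simp only [Nat.add_sub_cancel] at hdec
  refine ⟨key_div p n k 𝓕 hdiv V hV C₁ C₂ hdec S₁ S₂ hS₁ hS₂ hdisj,
    key_div p n k 𝓕 hdiv V hV C₂ C₁ (by rw [hdec, sup_comm]) S₂ S₁ hS₂ hS₁ hdisj.symm, ?_⟩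
  have hle : 𝓕.card ≤ ((𝓕.image (· ∩ S₁)) ×ˢ (𝓕.image (· ∩ S₂))).card := by
    apply Finset.card_le_card_of_injOn (fun A => (A ∩ S₁, A ∩ S₂))
    · intro A hA
      rw [Finset.mem_coe, Finset.mem_product]
      exact ⟨Finset.mem_image_of_mem _ hA, Finset.mem_image_of_mem _ hA⟩
    · intro A hA B hB h
      have h1 : A ∩ S₁ = B ∩ S₁ := congrArg Prod.fst h
      have h2 : A ∩ S₂ = B ∩ S₂ := congrArg Prod.snd h
      calc A = A ∩ (S₁ ∪ S₂) := by rw [hcover, Finset.inter_univ]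
        _ = (A ∩ S₁) ∪ (A ∩ S₂) := Finset.inter_union_distrib_left ..
        _ = (B ∩ S₁) ∪ (B ∩ S₂) := by rw [h1, h2]
        _ = B ∩ (S₁ ∪ S₂) := (Finset.inter_union_distrib_left ..).symm
        _ = B := by rw [hcover, Finset.inter_univ]
  simpa [Finset.card_product] using hle
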